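/- Let n ≥ 5 and let λ be the Lie multiplication n₅,₁⊕𝔞ₙ₋₅ on ℂⁿ. Then Der(λ) has dimension n² − 5n + 15, there exists an abelian ideal of λ of dimension n − 2, and every abelian ideal of λ has dimension at most n − 2. -/

import Mathlib

noncomputable section

abbrev V (n : ℕ) : Type := Fin n → ℂ

abbrev Bil (n : ℕ) : Type := V n →ₗ[ℂ] V n →ₗ[ℂ] V n

instance BilTop (n : ℕ) : TopologicalSpace (Bil n) :=
  TopologicalSpace.induced (fun μ : Bil n => fun x y : V n => μ x y) inferInstance

/-- The change-of-basis action of a linear automorphism on multiplications. -/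
def act {n : ℕ} (g : V n ≃ₗ[ℂ] V n) (μ : Bil n) : Bil n :=
  LinearMap.mk₂ ℂ (fun x y => g (μ (g.symm x) (g.symm y)))
    (fun x x' y => by simp)
    (fun c x y => by simp)
    (fun x y y' => by simp)
    (fun c x y => by simp)

/-- The orbit of a multiplication under the change-of-basis action. -/
def orb {n : ℕ} (μ : Bil n) : Set (Bil n) :=
  Set.range fun g : V n ≃ₗ[ℂ] V n => act g μ

/-- Two multiplications are isomorphic iff they lie in the same orbit. -/
def Isom {n : ℕ} (μ ν : Bil n) : Prop := ∃ g : V n ≃ₗ[ℂ] V n, act g μ = ν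

def levelOne {n : ℕ} (lam : Bil n) : Prop :=
  lam ≠ 0 ∧ closure (orb lam) ⊆ orb lam ∪ {0}

def levelTwo {n : ℕ} (lam : Bil n) : Prop :=
  (∀ μ ∈ closure (orb lam) \ orb lam, closure (orb μ) ⊆ orb μ ∪ {0}) ∧
  ∃ μ ∈ closure (orb lam) \ orb lam, μ ≠ 0

/-- `E n k` is the standard basis vector `e_{k+1}` of `ℂⁿ` (0-indexed `k`). -/
def E (n k : ℕ) : V n := fun m => if (m : ℕ) = k then 1 else 0

/-- The bilinear multiplication determined by a table of products of basis vectors. -/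
def ofTable {n : ℕ} (c : Fin n → Fin n → V n) : Bil n :=
  LinearMap.mk₂ ℂ (fun x y => ∑ i : Fin n, ∑ j : Fin n, (x i * y j) • c i j)
    (fun x x' y => by
      simp [add_mul, add_smul, Finset.sum_add_distrib])
    (fun a x y => by
      simp [Finset.smul_sum, smul_smul, mul_assoc])
    (fun x y y' => by
      simp [mul_add, add_smul, Finset.sum_add_distrib])
    (fun a x y => by
      simp [Finset.smul_sum, smul_smul, mul_assoc, mul_left_comm])

def JordanMul {n : ℕ} (lam : Bil n) : Prop :=
  (∀ x y : V n, lam x y = lam y x) ∧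
  ∀ x y : V n, lam (lam x x) (lam y x) = lam (lam (lam x x) y) x

def LieMul {n : ℕ} (lam : Bil n) : Prop :=
  (∀ x : V n, lam x x = 0) ∧
  ∀ x y z : V n, lam x (lam y z) + lam y (lam z x) + lam z (lam x y) = 0

def AssocMul {n : ℕ} (lam : Bil n) : Prop :=
  ∀ x y z : V n, lam (lam x y) z = lam x (lam y z)
/-- The space of derivations of a multiplication. -/
def Der {n : ℕ} (lam : Bil n) : Submodule ℂ (Module.End ℂ (V n)) where
  carrier := { D | ∀ x y : V n, D (lam x y) = lam (D x) y + lam x (D y) }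
  add_mem' := by
    intro a b ha hb x y
    simp only [LinearMap.add_apply, ha x y, hb x y, map_add, LinearMap.add_apply]
    abel
  zero_mem' := by intro x y; simp
  smul_mem' := by
    intro c a ha x y
    simp only [LinearMap.smul_apply, ha x y, map_smul, smul_add, LinearMap.smul_apply]

/-- `I` is an abelian ideal of the (Lie) multiplication `lam`. -/
def IsAbelianIdeal {n : ℕ} (lam : Bil n) (I : Submodule ℂ (V n)) : Prop :=
  (∀ x : V n, ∀ v ∈ I, lam x v ∈ I) ∧ ∀ v ∈ I, ∀ w ∈ I, lam v w = 0
/-- `n₅,₁ ⊕ 𝔞_{n-5}`: `[e₁,e₃] = e₅`, `[e₂,e₄] = e₅`. -/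
def n51 (n : ℕ) : Bil n :=
  ofTable fun i j =>
    if i.val = 0 ∧ j.val = 2 then E n 4
    else if i.val = 2 ∧ j.val = 0 then -E n 4
    else if i.val = 1 ∧ j.val = 3 then E n 4
    else if i.val = 3 ∧ j.val = 1 then -E n 4
    else 0

/-- `n₅,₂ ⊕ 𝔞_{n-5}`: `[e₁,e₂] = e₄`, `[e₁,e₃] = e₅`. -/
def n52 (n : ℕ) : Bil n :=
  ofTable fun i j =>
    if i.val = 0 ∧ j.val = 1 then E n 3
    else if i.val = 1 ∧ j.val = 0 then -E n 3
    else if i.val = 0 ∧ j.val = 2 then E n 4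
    else if i.val = 2 ∧ j.val = 0 then -E n 4
    else 0

/-- `r₂ ⊕ 𝔞_{n-2}`: `[e₁,e₂] = e₂`. -/
def r2 (n : ℕ) : Bil n :=
  ofTable fun i j =>
    if i.val = 0 ∧ j.val = 1 then E n 1
    else if i.val = 1 ∧ j.val = 0 then -E n 1
    else 0

/-- `g_{n,1}(α)`: `[e₁,e₂] = α e₂`, `[e₁,eᵢ] = eᵢ` for `3 ≤ i ≤ n`. -/
def g1 (n : ℕ) (α : ℂ) : Bil n :=
  ofTable fun i j =>
    if i.val = 0 ∧ j.val = 1 then α • E n 1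
    else if i.val = 1 ∧ j.val = 0 then -(α • E n 1)
    else if i.val = 0 ∧ 2 ≤ j.val then E n j.val
    else if j.val = 0 ∧ 2 ≤ i.val then -E n i.val
    else 0

/-- `g_{n,2}`: `[e₁,e₂] = e₂ + e₃`, `[e₁,eᵢ] = eᵢ` for `3 ≤ i ≤ n`. -/
def g2 (n : ℕ) : Bil n :=
  ofTable fun i j =>
    if i.val = 0 ∧ j.val = 1 then E n 1 + E n 2
    else if i.val = 1 ∧ j.val = 0 then -(E n 1 + E n 2)
    else if i.val = 0 ∧ 2 ≤ j.val then E n j.val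
    else if j.val = 0 ∧ 2 ≤ i.val then -E n i.val
    else 0


-- ===== auxiliary development =====
section N51Aux

variable {n : ℕ}

set_option maxHeartbeats 1000000

def om (hn : 5 ≤ n) (x y : V n) : ℂ :=
  x ⟨0, by omega⟩ * y ⟨2, by omega⟩ - x ⟨2, by omega⟩ * y ⟨0, by omega⟩ +
  x ⟨1, by omega⟩ * y ⟨3, by omega⟩ - x ⟨3, by omega⟩ * y ⟨1, by omega⟩

lemma n51_apply (hn : 5 ≤ n) (x y : V n) :
    n51 n x y = om hn x y • E n 4 := by
  have hc : ∀ i j : Fin n,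
      (if i.val = 0 ∧ j.val = 2 then E n 4
      else if i.val = 2 ∧ j.val = 0 then -E n 4
      else if i.val = 1 ∧ j.val = 3 then E n 4
      else if i.val = 3 ∧ j.val = 1 then -E n 4
      else 0)
      = ((if i = (⟨0, by omega⟩ : Fin n) then (1:ℂ) else 0) * (if j = (⟨2, by omega⟩ : Fin n) then 1 else 0)
        - (if i = (⟨2, by omega⟩ : Fin n) then (1:ℂ) else 0) * (if j = (⟨0, by omega⟩ : Fin n) then 1 else 0)
        + (if i = (⟨1, by omega⟩ : Fin n) then (1:ℂ) else 0) * (if j = (⟨3, by omega⟩ : Fin n) then 1 else 0)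
        - (if i = (⟨3, by omega⟩ : Fin n) then (1:ℂ) else 0) * (if j = (⟨1, by omega⟩ : Fin n) then 1 else 0)) • E n 4 := by
    intro i j
    simp only [Fin.ext_iff]
    split_ifs <;> first | omega | norm_num
  have : n51 n x y = ∑ i : Fin n, ∑ j : Fin n, (x i * y j) • _ := rfl
  rw [this]
  rw [Finset.sum_congr rfl fun i _ => Finset.sum_congr rfl fun j _ => by rw [hc i j]]
  have : ∀ i j : Fin n, (x i * y j) •
      (((if i = (⟨0, by omega⟩ : Fin n) then (1:ℂ) else 0) * (if j = (⟨2, by omega⟩ : Fin n) then 1 else 0)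
        - (if i = (⟨2, by omega⟩ : Fin n) then (1:ℂ) else 0) * (if j = (⟨0, by omega⟩ : Fin n) then 1 else 0)
        + (if i = (⟨1, by omega⟩ : Fin n) then (1:ℂ) else 0) * (if j = (⟨3, by omega⟩ : Fin n) then 1 else 0)
        - (if i = (⟨3, by omega⟩ : Fin n) then (1:ℂ) else 0) * (if j = (⟨1, by omega⟩ : Fin n) then 1 else 0)) • E n 4)
      = ((x i * y j) *
      ((if i = (⟨0, by omega⟩ : Fin n) then (1:ℂ) else 0) * (if j = (⟨2, by omega⟩ : Fin n) then 1 else 0)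
        - (if i = (⟨2, by omega⟩ : Fin n) then (1:ℂ) else 0) * (if j = (⟨0, by omega⟩ : Fin n) then 1 else 0)
        + (if i = (⟨1, by omega⟩ : Fin n) then (1:ℂ) else 0) * (if j = (⟨3, by omega⟩ : Fin n) then 1 else 0)
        - (if i = (⟨3, by omega⟩ : Fin n) then (1:ℂ) else 0) * (if j = (⟨1, by omega⟩ : Fin n) then 1 else 0))) • E n 4 := by
    intro i j; rw [smul_smul]
  rw [Finset.sum_congr rfl fun i _ => Finset.sum_congr rfl fun j _ => this i j]
  rw [Finset.sum_congr rfl fun i (_ : i ∈ Finset.univ) => (Finset.sum_smul).symm, ← Finset.sum_smul]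
  congr 1
  simp only [mul_sub, mul_add, mul_ite, mul_one, mul_zero, ite_mul, zero_mul,
    Finset.sum_sub_distrib, Finset.sum_add_distrib, Finset.sum_ite_eq, Finset.sum_ite_eq',
    Finset.mem_univ, if_true]
  simp [om]

lemma x_expand (x : V n) : x = ∑ j : Fin n, x j • E n (j : ℕ) := by
  funext a
  have h : ∀ j : Fin n, x j * E n (j:ℕ) a = if j = a then x j else 0 := by
    intro j
    simp only [E]
    by_cases hc : j = a
    · subst hc; simp
    · rw [if_neg (fun hx => hc (Fin.ext hx.symm)), if_neg hc, mul_zero]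
  rw [Finset.sum_apply]
  simp only [Pi.smul_apply, smul_eq_mul, h, Finset.sum_ite_eq', Finset.mem_univ, if_true]

lemma apply_coord (D : Module.End ℂ (V n)) (x : V n) (r : Fin n) :
    D x r = ∑ j : Fin n, x j * D (E n (j : ℕ)) r := by
  conv_lhs => rw [x_expand x]
  rw [map_sum]
  rw [Finset.sum_apply]
  simp

def skip4 (hn : 5 ≤ n) (i : Fin (n - 1)) : Fin n :=
  if i.val < 4 then ⟨i.val, by omega⟩ else ⟨i.val + 1, by have := i.isLt; omega⟩
def ev (v : V n) (r : Fin n) : Module.End ℂ (V n) →ₗ[ℂ] ℂ :=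
  (LinearMap.proj r).comp (LinearMap.applyₗ v)
def Theta (hn : 5 ≤ n) : Module.End ℂ (V n) →ₗ[ℂ]
    (Fin (n-1) → ℂ) × (Fin 4 → Fin (n-5) → ℂ) × (Fin 6 → ℂ) :=
  LinearMap.prod
    (LinearMap.pi fun i => ev (E n 4) (skip4 hn i))
    (LinearMap.prod
      (LinearMap.pi fun r : Fin 4 =>
        LinearMap.pi fun j : Fin (n-5) => ev (E n (j.val + 5)) ⟨r.val, by omega⟩)
      (LinearMap.pi fun k : Fin 6 =>
        ![ev (E n 1) ⟨2, by omega⟩ - ev (E n 0) ⟨3, by omega⟩,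
          ev (E n 3) ⟨2, by omega⟩ + ev (E n 0) ⟨1, by omega⟩,
          ev (E n 2) ⟨3, by omega⟩ + ev (E n 1) ⟨0, by omega⟩,
          ev (E n 3) ⟨0, by omega⟩ - ev (E n 2) ⟨1, by omega⟩,
          ev (E n 0) ⟨0, by omega⟩ + ev (E n 2) ⟨2, by omega⟩ - ev (E n 4) ⟨4, by omega⟩,
          ev (E n 1) ⟨1, by omega⟩ + ev (E n 3) ⟨3, by omega⟩ - ev (E n 4) ⟨4, by omega⟩] k))
lemma Theta1 (hn : 5 ≤ n) (D : Module.End ℂ (V n)) (i : Fin (n-1)) :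
    (Theta hn D).1 i = D (E n 4) (skip4 hn i) := rfl
lemma Theta2 (hn : 5 ≤ n) (D : Module.End ℂ (V n)) (r : Fin 4) (j : Fin (n-5)) :
    (Theta hn D).2.1 r j = D (E n (j.val + 5)) ⟨r.val, by omega⟩ := rfl
lemma Theta3 (hn : 5 ≤ n) (D : Module.End ℂ (V n)) (k : Fin 6) :
    (Theta hn D).2.2 k =
      ![D (E n 1) ⟨2, by omega⟩ - D (E n 0) ⟨3, by omega⟩,
        D (E n 3) ⟨2, by omega⟩ + D (E n 0) ⟨1, by omega⟩,
        D (E n 2) ⟨3, by omega⟩ + D (E n 1) ⟨0, by omega⟩,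
        D (E n 3) ⟨0, by omega⟩ - D (E n 2) ⟨1, by omega⟩,
        D (E n 0) ⟨0, by omega⟩ + D (E n 2) ⟨2, by omega⟩ - D (E n 4) ⟨4, by omega⟩,
        D (E n 1) ⟨1, by omega⟩ + D (E n 3) ⟨3, by omega⟩ - D (E n 4) ⟨4, by omega⟩] k := by
  fin_cases k <;> rfl

def Msur (hn : 5 ≤ n) (u : Fin (n-1) → ℂ) (v : Fin 4 → Fin (n-5) → ℂ) (w : Fin 6 → ℂ) :
    Matrix (Fin n) (Fin n) ℂ := fun a b =>
  if h0 : b.val = 4 ∧ a.val < 4 then u ⟨a.val, by omega⟩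
  else if h1 : b.val = 4 ∧ 4 < a.val then u ⟨a.val - 1, by have := a.isLt; omega⟩
  else if h2 : a.val < 4 ∧ 5 ≤ b.val then v ⟨a.val, h2.1⟩ ⟨b.val - 5, by have := b.isLt; omega⟩
  else if a.val = 2 ∧ b.val = 1 then w 0
  else if a.val = 2 ∧ b.val = 3 then w 1
  else if a.val = 3 ∧ b.val = 2 then w 2
  else if a.val = 0 ∧ b.val = 3 then w 3
  else if a.val = 2 ∧ b.val = 2 then w 4
  else if a.val = 3 ∧ b.val = 3 then w 5
  else 0

lemma mulVecLin_E (M : Matrix (Fin n) (Fin n) ℂ) (k : ℕ) (hk : k < n) (a : Fin n) :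
    M.mulVecLin (E n k) a = M a ⟨k, hk⟩ := by
  simp only [Matrix.mulVecLin_apply, Matrix.mulVec, dotProduct, E]
  have h : ∀ b : Fin n, M a b * (if (b : ℕ) = k then 1 else 0) = if b = ⟨k, hk⟩ then M a b else 0 := by
    intro b
    by_cases hb : b = ⟨k, hk⟩
    · subst hb; simp
    · rw [if_neg (fun hc => hb (Fin.ext (by simpa using hc))), if_neg hb, mul_zero]
  simp only [h, Finset.sum_ite_eq', Finset.mem_univ, if_true]

lemma Theta_surj (hn : 5 ≤ n) : Function.Surjective (Theta hn) := by
  rintro ⟨u, v, w⟩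
  refine ⟨(Msur hn u v w).mulVecLin, ?_⟩
  set D := (Msur hn u v w).mulVecLin with hD
  have hDE : ∀ (s : ℕ) (hs : s < n) (r : Fin n), D (E n s) r = Msur hn u v w r ⟨s, hs⟩ :=
    fun s hs r => mulVecLin_E _ s hs r
  refine Prod.ext ?_ (Prod.ext ?_ ?_)
  · funext i
    rw [show (Theta hn D).1 i = D (E n 4) (skip4 hn i) from rfl,
      hDE 4 (by omega) (skip4 hn i)]
    show Msur hn u v w (skip4 hn i) ⟨4, by omega⟩ = u i
    rcases lt_or_ge (i : ℕ) 4 with h4 | h4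
    · have hsk : skip4 hn i = ⟨i.val, by omega⟩ := by unfold skip4; rw [if_pos h4]
      rw [hsk]
      unfold Msur
      rw [dif_pos ⟨rfl, h4⟩]
      try exact congrArg u (Fin.ext rfl)
    · have hsk : skip4 hn i = ⟨i.val + 1, by have := i.isLt; omega⟩ := by
        unfold skip4; rw [if_neg (by omega)]
      rw [hsk]
      unfold Msur
      rw [dif_neg (by rintro ⟨-, hlt⟩; change (i:ℕ) + 1 < 4 at hlt; omega),
        dif_pos ⟨rfl, by change (4:ℕ) < (i:ℕ) + 1; omega⟩]
      exact congrArg u (Fin.ext (by simp))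
  · funext r j
    rw [show (Theta hn D).2.1 r j = D (E n (j.val + 5)) ⟨r.val, by omega⟩ from rfl,
      hDE (j.val + 5) (by have := j.isLt; omega)]
    unfold Msur
    rw [dif_neg (by rintro ⟨h, -⟩; change (j:ℕ) + 5 = 4 at h; omega),
      dif_neg (by rintro ⟨h, -⟩; change (j:ℕ) + 5 = 4 at h; omega),
      dif_pos ⟨by simpa using r.isLt, by change (5:ℕ) ≤ (j:ℕ) + 5; omega⟩]
    have e1 : (⟨(⟨r.val, by omega⟩ : Fin n).val, by simpa using r.isLt⟩ : Fin 4) = r :=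
      Fin.ext rfl
    have e2 : (⟨(⟨j.val + 5, by have := j.isLt; omega⟩ : Fin n).val - 5, by
        have := j.isLt; omega⟩ : Fin (n-5)) = j := Fin.ext (by simp)
    rw [e1, e2]
  · funext k
    rw [Theta3 hn D k]
    fin_cases k
    · show D (E n 1) ⟨2, by omega⟩ - D (E n 0) ⟨3, by omega⟩ = w 0
      rw [hDE 1 (by omega), hDE 0 (by omega)]
      norm_num [Msur]
    · show D (E n 3) ⟨2, by omega⟩ + D (E n 0) ⟨1, by omega⟩ = w 1
      rw [hDE 3 (by omega), hDE 0 (by omega)]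
      norm_num [Msur]
    · show D (E n 2) ⟨3, by omega⟩ + D (E n 1) ⟨0, by omega⟩ = w 2
      rw [hDE 2 (by omega), hDE 1 (by omega)]
      norm_num [Msur]
    · show D (E n 3) ⟨0, by omega⟩ - D (E n 2) ⟨1, by omega⟩ = w 3
      rw [hDE 3 (by omega), hDE 2 (by omega)]
      norm_num [Msur]
    · show D (E n 0) ⟨0, by omega⟩ + D (E n 2) ⟨2, by omega⟩ - D (E n 4) ⟨4, by omega⟩ = w 4
      rw [hDE 0 (by omega), hDE 2 (by omega), hDE 4 (by omega)]
      norm_num [Msur]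
    · show D (E n 1) ⟨1, by omega⟩ + D (E n 3) ⟨3, by omega⟩ - D (E n 4) ⟨4, by omega⟩ = w 5
      rw [hDE 1 (by omega), hDE 3 (by omega), hDE 4 (by omega)]
      norm_num [Msur]
-- helper om computations
lemma om_r0 (hn : 5 ≤ n) (v : V n) : om hn v (E n 0) = -(v ⟨2, by omega⟩) := by
  simp [om, E]
lemma om_r1 (hn : 5 ≤ n) (v : V n) : om hn v (E n 1) = -(v ⟨3, by omega⟩) := by
  simp [om, E]
lemma om_r2 (hn : 5 ≤ n) (v : V n) : om hn v (E n 2) = v ⟨0, by omega⟩ := by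
  simp [om, E]
lemma om_r3 (hn : 5 ≤ n) (v : V n) : om hn v (E n 3) = v ⟨1, by omega⟩ := by
  simp [om, E]
lemma om_l0 (hn : 5 ≤ n) (v : V n) : om hn (E n 0) v = v ⟨2, by omega⟩ := by
  simp [om, E]
lemma om_l1 (hn : 5 ≤ n) (v : V n) : om hn (E n 1) v = v ⟨3, by omega⟩ := by
  simp [om, E]
lemma om_l2 (hn : 5 ≤ n) (v : V n) : om hn (E n 2) v = -(v ⟨0, by omega⟩) := by
  simp [om, E]
lemma om_l3 (hn : 5 ≤ n) (v : V n) : om hn (E n 3) v = -(v ⟨1, by omega⟩) := by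
  simp [om, E]
lemma om_lhigh (hn : 5 ≤ n) (j : ℕ) (hj : 4 ≤ j) (v : V n) : om hn (E n j) v = 0 := by
  simp only [om, E]
  rw [if_neg (by omega), if_neg (by omega), if_neg (by omega), if_neg (by omega)]
  ring
lemma E4at4 (hn : 5 ≤ n) : E n 4 ⟨4, by omega⟩ = 1 := by simp [E]


lemma skip4_val_ne (hn : 5 ≤ n) (i : Fin (n-1)) : (skip4 hn i).val ≠ 4 := by
  unfold skip4; split_ifs <;> simp <;> omega

lemma der_eq_ker (hn : 5 ≤ n) : Der (n51 n) = LinearMap.ker (Theta hn) := by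
  ext D
  constructor
  · intro hD
    have hD' : ∀ x y : V n, D (n51 n x y) = n51 n (D x) y + n51 n x (D y) := hD
    have pair : ∀ x y : V n,
        om hn x y • D (E n 4) = (om hn (D x) y + om hn x (D y)) • E n 4 := by
      intro x y
      have q := hD' x y
      rw [n51_apply hn x y, n51_apply hn (D x) y, n51_apply hn x (D y), map_smul, ← add_smul] at q
      exact q
    -- column 4
    have h02 := pair (E n 0) (E n 2)
    rw [om_r2 hn (E n 0), om_r2 hn (D (E n 0)), om_l0 hn (D (E n 2))] at h02
    simp only [E, if_pos rfl] at h02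
    norm_num at h02
    -- h02 : D (E n 4) = (D (E n 0) ⟨0,_⟩ + D (E n 2) ⟨2,_⟩) • E n 4  (hopefully)
    have h13 := pair (E n 1) (E n 3)
    rw [om_r3 hn (E n 1), om_r3 hn (D (E n 1)), om_l1 hn (D (E n 3))] at h13
    simp only [E, if_pos rfl] at h13
    norm_num at h13
    -- rows
    have hrow2 : ∀ j : ℕ, 4 ≤ j → D (E n j) ⟨2, by omega⟩ = 0 := by
      intro j hj
      have q := pair (E n j) (E n 0)
      rw [om_lhigh hn j hj (E n 0), om_lhigh hn j hj (D (E n 0)), om_r0 hn (D (E n j)),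
        zero_smul] at q
      have q4 := congrFun q.symm ⟨4, by omega⟩
      simpa [E] using q4
    have hrow3 : ∀ j : ℕ, 4 ≤ j → D (E n j) ⟨3, by omega⟩ = 0 := by
      intro j hj
      have q := pair (E n j) (E n 1)
      rw [om_lhigh hn j hj (E n 1), om_lhigh hn j hj (D (E n 1)), om_r1 hn (D (E n j)),
        zero_smul] at q
      have q4 := congrFun q.symm ⟨4, by omega⟩
      simpa [E] using q4
    have hrow0 : ∀ j : ℕ, 4 ≤ j → D (E n j) ⟨0, by omega⟩ = 0 := by
      intro j hj
      have q := pair (E n j) (E n 2)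
      rw [om_lhigh hn j hj (E n 2), om_lhigh hn j hj (D (E n 2)), om_r2 hn (D (E n j)),
        zero_smul] at q
      have q4 := congrFun q.symm ⟨4, by omega⟩
      simpa [E] using q4
    have hrow1 : ∀ j : ℕ, 4 ≤ j → D (E n j) ⟨1, by omega⟩ = 0 := by
      intro j hj
      have q := pair (E n j) (E n 3)
      rw [om_lhigh hn j hj (E n 3), om_lhigh hn j hj (D (E n 3)), om_r3 hn (D (E n j)),
        zero_smul] at q
      have q4 := congrFun q.symm ⟨4, by omega⟩
      simpa [E] using q4
    -- six relations
    have s01 : D (E n 1) ⟨2, by omega⟩ - D (E n 0) ⟨3, by omega⟩ = 0 := by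
      have q := pair (E n 0) (E n 1)
      rw [om_r1 hn (E n 0), om_r1 hn (D (E n 0)), om_l0 hn (D (E n 1))] at q
      have q4 := congrFun q ⟨4, by omega⟩
      simp [E] at q4
      linear_combination -q4
    have s03 : D (E n 3) ⟨2, by omega⟩ + D (E n 0) ⟨1, by omega⟩ = 0 := by
      have q := pair (E n 0) (E n 3)
      rw [om_r3 hn (E n 0), om_r3 hn (D (E n 0)), om_l0 hn (D (E n 3))] at q
      have q4 := congrFun q ⟨4, by omega⟩
      simp [E] at q4
      linear_combination -q4
    have s12 : D (E n 2) ⟨3, by omega⟩ + D (E n 1) ⟨0, by omega⟩ = 0 := by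
      have q := pair (E n 1) (E n 2)
      rw [om_r2 hn (E n 1), om_r2 hn (D (E n 1)), om_l1 hn (D (E n 2))] at q
      have q4 := congrFun q ⟨4, by omega⟩
      simp [E] at q4
      linear_combination -q4
    have s23 : D (E n 3) ⟨0, by omega⟩ - D (E n 2) ⟨1, by omega⟩ = 0 := by
      have q := pair (E n 2) (E n 3)
      rw [om_r3 hn (E n 2), om_r3 hn (D (E n 2)), om_l2 hn (D (E n 3))] at q
      have q4 := congrFun q ⟨4, by omega⟩
      simp [E] at q4
      linear_combination q4
    have s4 : D (E n 0) ⟨0, by omega⟩ + D (E n 2) ⟨2, by omega⟩ - D (E n 4) ⟨4, by omega⟩ = 0 := by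
      have q4 := congrFun h02 ⟨4, by omega⟩
      simp [E] at q4
      linear_combination q4.symm
    have s5 : D (E n 1) ⟨1, by omega⟩ + D (E n 3) ⟨3, by omega⟩ - D (E n 4) ⟨4, by omega⟩ = 0 := by
      have q4 := congrFun h13 ⟨4, by omega⟩
      simp [E] at q4
      linear_combination q4.symm
    rw [LinearMap.mem_ker]
    rw [Prod.ext_iff, Prod.ext_iff]
    refine ⟨funext fun i => ?_, funext fun r => funext fun j => ?_, funext fun k => ?_⟩
    · rw [Theta1 hn D i]
      rw [h02]
      have : E n 4 (skip4 hn i) = 0 := by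
        simp only [E]
        exact if_neg (skip4_val_ne hn i)
      simp [this]
    · rw [Theta2 hn D r j]
      have h4 : 4 ≤ j.val + 5 := by omega
      fin_cases r
      · simpa using hrow0 (j.val+5) h4
      · simpa using hrow1 (j.val+5) h4
      · simpa using hrow2 (j.val+5) h4
      · simpa using hrow3 (j.val+5) h4
    · rw [Theta3 hn D k]
      fin_cases k
      · simpa using s01
      · simpa using s03
      · simpa using s12
      · simpa using s23
      · simpa using s4
      · simpa using s5
  · intro hker
    rw [LinearMap.mem_ker] at hker
    have h1 : (Theta hn D).1 = 0 := by rw [hker]; rfl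
    have h21 : (Theta hn D).2.1 = 0 := by rw [hker]; rfl
    have h22 : (Theta hn D).2.2 = 0 := by rw [hker]; rfl
    have k1 : ∀ i : Fin (n-1), D (E n 4) (skip4 hn i) = 0 := by
      intro i
      have h := congrFun h1 i
      rw [Theta1 hn D i] at h
      simpa using h
    have k2 : ∀ (r : Fin 4) (j : Fin (n-5)), D (E n (j.val + 5)) ⟨r.val, by omega⟩ = 0 := by
      intro r j
      have h := congrFun (congrFun h21 r) j
      rw [Theta2 hn D r j] at h
      simpa using h
    have t0 : D (E n 1) ⟨2, by omega⟩ - D (E n 0) ⟨3, by omega⟩ = 0 := by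
      have h := congrFun h22 0
      exact h
    have t1 : D (E n 3) ⟨2, by omega⟩ + D (E n 0) ⟨1, by omega⟩ = 0 := by
      have h := congrFun h22 1
      exact h
    have t2 : D (E n 2) ⟨3, by omega⟩ + D (E n 1) ⟨0, by omega⟩ = 0 := by
      have h := congrFun h22 2
      exact h
    have t3 : D (E n 3) ⟨0, by omega⟩ - D (E n 2) ⟨1, by omega⟩ = 0 := by
      have h := congrFun h22 3
      exact h
    have t4 : D (E n 0) ⟨0, by omega⟩ + D (E n 2) ⟨2, by omega⟩ - D (E n 4) ⟨4, by omega⟩ = 0 := by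
      have h := congrFun h22 4
      exact h
    have t5 : D (E n 1) ⟨1, by omega⟩ + D (E n 3) ⟨3, by omega⟩ - D (E n 4) ⟨4, by omega⟩ = 0 := by
      have h := congrFun h22 5
      exact h
    have hcol : D (E n 4) = D (E n 4) ⟨4, by omega⟩ • E n 4 := by
      funext a
      by_cases ha : a.val = 4
      · have ha' : a = ⟨4, by omega⟩ := Fin.ext ha
        rw [ha']
        simp [E]
      · have hlt := a.isLt
        have hz : D (E n 4) a = 0 := by
          rcases lt_or_ge a.val 4 with h4 | h4
          · have hk := k1 ⟨a.val, by omega⟩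
            have hs : skip4 hn (⟨a.val, by omega⟩ : Fin (n-1)) = a := by
              unfold skip4
              rw [if_pos (by simpa using h4)]
            rwa [hs] at hk
          · have h5 : 5 ≤ a.val := by omega
            have hk := k1 ⟨a.val - 1, by omega⟩
            have hs : skip4 hn (⟨a.val - 1, by omega⟩ : Fin (n-1)) = a := by
              unfold skip4
              rw [if_neg (by simp; omega)]
              exact Fin.ext (by simp; omega)
            rwa [hs] at hk
        have hE : E n 4 a = 0 := by simp only [E]; exact if_neg ha
        rw [hz, Pi.smul_apply, hE, smul_zero]
    have hrowz : ∀ (jv : ℕ) (hj1 : jv < n) (hj2 : 4 ≤ jv) (rv : ℕ) (hr4 : rv < 4),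
        D (E n jv) ⟨rv, by omega⟩ = 0 := by
      intro jv hjn hj4 rv hr
      rcases Nat.eq_or_lt_of_le hj4 with he | hlt5
      · subst he
        rw [hcol]
        simp only [Pi.smul_apply, smul_eq_mul, E]
        rw [if_neg (by omega), mul_zero]
      · have hk := k2 ⟨rv, hr⟩ ⟨jv - 5, by omega⟩
        have hj : ((⟨jv - 5, by omega⟩ : Fin (n-5)) : ℕ) + 5 = jv := by simp; omega
        rw [hj] at hk
        exact hk
    have hrowf : ∀ (x : V n) (rv : ℕ) (hr : rv < 4),
        D x ⟨rv, by omega⟩ =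
          x ⟨0, by omega⟩ * D (E n 0) ⟨rv, by omega⟩ +
          x ⟨1, by omega⟩ * D (E n 1) ⟨rv, by omega⟩ +
          x ⟨2, by omega⟩ * D (E n 2) ⟨rv, by omega⟩ +
          x ⟨3, by omega⟩ * D (E n 3) ⟨rv, by omega⟩ := by
      intro x rv hr
      rw [apply_coord]
      rw [← Finset.sum_subset
        (Finset.subset_univ ({⟨0, by omega⟩, ⟨1, by omega⟩, ⟨2, by omega⟩, ⟨3, by omega⟩} :
          Finset (Fin n)))
        (fun b _ hb => ?_)]
      · rw [Finset.sum_insert (by simp [Fin.ext_iff]), Finset.sum_insert (by simp [Fin.ext_iff]),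
          Finset.sum_insert (by simp [Fin.ext_iff]), Finset.sum_singleton]
        norm_num
        ring
      · simp only [Finset.mem_insert, Finset.mem_singleton, Fin.ext_iff] at hb
        push_neg at hb
        have hb4 : 4 ≤ (b : ℕ) := by omega
        rw [hrowz b.val b.isLt hb4 rv hr, mul_zero]
    intro x y
    rw [n51_apply hn x y, n51_apply hn (D x) y, n51_apply hn x (D y), map_smul, hcol,
      smul_smul, ← add_smul]
    refine congrArg (· • E n 4) ?_
    simp only [om]
    rw [hrowf x 0 (by omega), hrowf x 1 (by omega), hrowf x 2 (by omega), hrowf x 3 (by omega),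
      hrowf y 0 (by omega), hrowf y 1 (by omega), hrowf y 2 (by omega), hrowf y 3 (by omega)]
    linear_combination
      (-(x ⟨0, by omega⟩ * y ⟨1, by omega⟩) + x ⟨1, by omega⟩ * y ⟨0, by omega⟩) * t0 +
      (-(x ⟨0, by omega⟩ * y ⟨3, by omega⟩) + x ⟨3, by omega⟩ * y ⟨0, by omega⟩) * t1 +
      (-(x ⟨1, by omega⟩ * y ⟨2, by omega⟩) + x ⟨2, by omega⟩ * y ⟨1, by omega⟩) * t2 +
      (-(x ⟨3, by omega⟩ * y ⟨2, by omega⟩) + x ⟨2, by omega⟩ * y ⟨3, by omega⟩) * t3 +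
      (-(x ⟨0, by omega⟩ * y ⟨2, by omega⟩) + x ⟨2, by omega⟩ * y ⟨0, by omega⟩) * t4 +
      (-(x ⟨1, by omega⟩ * y ⟨3, by omega⟩) + x ⟨3, by omega⟩ * y ⟨1, by omega⟩) * t5

-- the linear functional picking two coordinates
def L2 (hn : 5 ≤ n) : V n →ₗ[ℂ] (Fin 2 → ℂ) :=
  LinearMap.pi fun k => LinearMap.proj (![(⟨0, by omega⟩ : Fin n), ⟨1, by omega⟩] k)

lemma mem_kerL2 (hn : 5 ≤ n) (v : V n) :
    v ∈ LinearMap.ker (L2 hn) ↔ v ⟨0, by omega⟩ = 0 ∧ v ⟨1, by omega⟩ = 0 := by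
  simp only [LinearMap.mem_ker, L2, funext_iff, Fin.forall_fin_two]
  simp [LinearMap.pi_apply]

lemma part2 (hn : 5 ≤ n) :
    ∃ I : Submodule ℂ (V n), IsAbelianIdeal (n51 n) I ∧ Module.finrank ℂ I = n - 2 := by
  refine ⟨LinearMap.ker (L2 hn), ⟨⟨fun x v _ => ?_, fun v hv w hw => ?_⟩, ?_⟩⟩
  · rw [mem_kerL2, n51_apply hn]
    constructor <;> simp [E]
  · rw [mem_kerL2 hn] at hv hw
    rw [n51_apply hn]
    have : om hn v w = 0 := by
      simp [om, hv.1, hv.2, hw.1, hw.2]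
    rw [this, zero_smul]
  · have hsurj : Function.Surjective (L2 hn) := by
      intro u
      refine ⟨u 0 • E n 0 + u 1 • E n 1, ?_⟩
      funext k
      fin_cases k <;> simp [L2, LinearMap.pi_apply, E]
    have h1 := LinearMap.finrank_range_add_finrank_ker (L2 hn)
    rw [LinearMap.range_eq_top.mpr hsurj] at h1
    rw [finrank_top] at h1
    have h2 : Module.finrank ℂ (V n) = n := by simp
    have h3 : Module.finrank ℂ (Fin 2 → ℂ) = 2 := by simp
    omega

lemma part3 (hn : 5 ≤ n) (I : Submodule ℂ (V n)) (hI : IsAbelianIdeal (n51 n) I) :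
    Module.finrank ℂ I ≤ n - 2 := by
  by_contra hcon
  push_neg at hcon
  have hVn : Module.finrank ℂ (V n) = n := by simp
  have om_zero : ∀ v ∈ I, ∀ w ∈ I, om hn v w = 0 := by
    intro v hv w hw
    have h := hI.2 v hv w hw
    rw [n51_apply hn] at h
    have := congrFun h ⟨4, by omega⟩
    simpa [E] using this
  by_cases htop : I = ⊤
  · have h1 : om hn (E n 0) (E n 2) = 0 := om_zero _ (htop ▸ Submodule.mem_top) _ (htop ▸ Submodule.mem_top)
    rw [om] at h1
    norm_num [E] at h1
  · have hlt : I < ⊤ := lt_of_le_of_ne le_top htop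
    have hIrank : Module.finrank ℂ I = n - 1 := by
      have := Submodule.finrank_lt (K := ℂ) (V := V n) hlt.ne
      omega
    obtain ⟨f, hf0, hfmap⟩ := Submodule.exists_dual_map_eq_bot_of_lt_top hlt inferInstance
    have hIle : I ≤ LinearMap.ker f := by
      intro v hv
      rw [LinearMap.mem_ker]
      have : f v ∈ Submodule.map f I := Submodule.mem_map_of_mem hv
      rw [hfmap] at this
      simpa using this
    obtain ⟨x0, hx0⟩ : ∃ x0, f x0 ≠ 0 := by
      by_contra hc; push_neg at hc; exact hf0 (by ext v; simp [hc])
    have hker : Module.finrank ℂ (LinearMap.ker f) = n - 1 := by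
      have h1 := LinearMap.finrank_range_add_finrank_ker f
      have hrange : LinearMap.range f = ⊤ := by
        rw [LinearMap.range_eq_top]
        intro c
        exact ⟨(c / f x0) • x0, by rw [map_smul, smul_eq_mul]; field_simp⟩
      rw [hrange, finrank_top] at h1
      have : Module.finrank ℂ ℂ = 1 := Module.finrank_self ℂ
      omega
    have hIker : I = LinearMap.ker f := Submodule.eq_of_le_of_finrank_le hIle (by omega)
    set u : V n := (f x0)⁻¹ • x0 with hu
    have hfu : f u = 1 := by simp [hu, map_smul]; field_simp
    have key : ∀ x y : V n, om hn x y = f x * om hn u y - f y * om hn u x := by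
      intro x y
      have hx : x - f x • u ∈ LinearMap.ker f := by
        rw [LinearMap.mem_ker, map_sub, map_smul, hfu]; simp
      have hy : y - f y • u ∈ LinearMap.ker f := by
        rw [LinearMap.mem_ker, map_sub, map_smul, hfu]; simp
      have h0 := om_zero _ (hIker ▸ hx) _ (hIker ▸ hy)
      simp only [om, Pi.sub_apply, Pi.smul_apply, smul_eq_mul] at h0 ⊢
      linear_combination h0
    have h02 : (1:ℂ) = f (E n 0) * om hn u (E n 2) - f (E n 2) * om hn u (E n 0) := by
      have := key (E n 0) (E n 2); rw [om] at this; norm_num [E] at this; linear_combination this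
    have h13 : (1:ℂ) = f (E n 1) * om hn u (E n 3) - f (E n 3) * om hn u (E n 1) := by
      have := key (E n 1) (E n 3); rw [om] at this; norm_num [E] at this; linear_combination this
    have h01 : (0:ℂ) = f (E n 0) * om hn u (E n 1) - f (E n 1) * om hn u (E n 0) := by
      have := key (E n 0) (E n 1); rw [om] at this; norm_num [E] at this; linear_combination this
    have h03 : (0:ℂ) = f (E n 0) * om hn u (E n 3) - f (E n 3) * om hn u (E n 0) := by
      have := key (E n 0) (E n 3); rw [om] at this; norm_num [E] at this; linear_combination this
    have h12 : (0:ℂ) = f (E n 1) * om hn u (E n 2) - f (E n 2) * om hn u (E n 1) := by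
      have := key (E n 1) (E n 2); rw [om] at this; norm_num [E] at this; linear_combination this
    have h23 : (0:ℂ) = f (E n 2) * om hn u (E n 3) - f (E n 3) * om hn u (E n 2) := by
      have := key (E n 2) (E n 3); rw [om] at this; norm_num [E] at this; linear_combination this
    have : (1:ℂ) = 0 := by
      linear_combination (f (E n 1) * om hn u (E n 3) - f (E n 3) * om hn u (E n 1)) * h02 + h13
        - (f (E n 2) * om hn u (E n 3) - f (E n 3) * om hn u (E n 2)) * h01
        - (f (E n 1) * om hn u (E n 2) - f (E n 2) * om hn u (E n 1)) * h03
    exact one_ne_zero this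

end N51Aux

/-- derivations and maximal abelian ideal of n51. -/
theorem der_ab_n51 (n : ℕ) (hn : 5 ≤ n)  :
    Module.finrank ℂ (Der (n51 n)) = n ^ 2 - 5 * n + 15 ∧
    (∃ I : Submodule ℂ (V n), IsAbelianIdeal (n51 n) I ∧ Module.finrank ℂ I = n - 2) ∧
    (∀ I : Submodule ℂ (V n), IsAbelianIdeal (n51 n) I → Module.finrank ℂ I ≤ n - 2) := by
  refine ⟨?_, part2 hn, fun I hI => part3 hn I hI⟩
  rw [der_eq_ker hn]
  have h1 := LinearMap.finrank_range_add_finrank_ker (Theta (n := n) hn)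
  rw [LinearMap.range_eq_top.mpr (Theta_surj hn), finrank_top] at h1
  have h2 : Module.finrank ℂ ((Fin (n-1) → ℂ) × (Fin 4 → Fin (n-5) → ℂ) × (Fin 6 → ℂ))
      = (n-1) + (4*(n-5) + 6) := by
    rw [Module.finrank_prod, Module.finrank_prod, Module.finrank_pi, Module.finrank_pi,
      Module.finrank_pi_fintype]
    simp [Module.finrank_pi]
  have h3 : Module.finrank ℂ (Module.End ℂ (V n)) = n * n := by
    rw [Module.finrank_linearMap]
    simp
  have h4 : 5 * n ≤ n * n := Nat.mul_le_mul_right n hn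
  have h5 : n ^ 2 = n * n := sq n
  omega
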